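/- arXiv:1308.3266 — 4 statements merged into one kernel-verified Lean document; each statement's English description precedes it below -/
import Mathlib

section
/- Let f and g be nonzero polynomials in k[x₀,…,x_n] with a fixed monomial order. If the leading monomials of f and g are coprime (their gcd is 1), then the S-polynomial S(f,g) reduces to zero upon division by the pair {f, g}; equivalently, S(f,g) can be written as q₁·f + q₂·g where the leading monomial of each product q_i·(f or g) is at most the leading monomial of S(f,g). -/
open MvPolynomial
open scoped MonomialOrder

/-- The leading exponent (leading monomial) of a multivariate polynomial with
respect to a monomial order. -/
noncomputable def leadExp {σ K : Type*} [Field K] (m : MonomialOrder σ)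
    (f : MvPolynomial σ K) : σ →₀ ℕ :=
  m.toSyn.symm (f.support.sup fun d => m.toSyn d)

/-- The leading coefficient of a multivariate polynomial with respect to a
monomial order. -/
noncomputable def leadCoeff {σ K : Type*} [Field K] (m : MonomialOrder σ)
    (f : MvPolynomial σ K) : K :=
  f.coeff (leadExp m f)

/-- The S-polynomial `S(f,g) = (lcm(LM f, LM g)/LT f)·f − (lcm(LM f, LM g)/LT g)·g`. -/
noncomputable def sPoly {σ K : Type*} [Field K] (m : MonomialOrder σ)
    (f g : MvPolynomial σ K) : MvPolynomial σ K :=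
  monomial (leadExp m f ⊔ leadExp m g - leadExp m f) (leadCoeff m f)⁻¹ * f -
    monomial (leadExp m f ⊔ leadExp m g - leadExp m g) (leadCoeff m g)⁻¹ * g

namespace SPolyAux

variable {σ K : Type*} [Field K] (m : MonomialOrder σ)

theorem toSyn_leadExp (f : MvPolynomial σ K) :
    m.toSyn (leadExp m f) = f.support.sup fun d => m.toSyn d := by
  simp [leadExp]

theorem le_toSyn_leadExp {f : MvPolynomial σ K} {d : σ →₀ ℕ} (hd : d ∈ f.support) :
    m.toSyn d ≤ m.toSyn (leadExp m f) := by
  rw [toSyn_leadExp]; exact Finset.le_sup hd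

theorem leadExp_mem {f : MvPolynomial σ K} (hf : f ≠ 0) : leadExp m f ∈ f.support := by
  obtain ⟨d, hd, hsup⟩ := Finset.exists_mem_eq_sup f.support
    (MvPolynomial.support_nonempty.mpr hf) (fun d => m.toSyn d)
  have h : leadExp m f = d := by rw [leadExp, hsup]; exact m.toSyn.symm_apply_apply d
  rwa [h]

theorem leadCoeff_ne_zero {f : MvPolynomial σ K} (hf : f ≠ 0) : leadCoeff m f ≠ 0 :=
  mem_support_iff.mp (leadExp_mem m hf)

theorem coeff_eq_zero_of_lt {f : MvPolynomial σ K} {d : σ →₀ ℕ}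
    (h : m.toSyn (leadExp m f) < m.toSyn d) : f.coeff d = 0 := by
  by_contra hc
  exact absurd (le_toSyn_leadExp m (mem_support_iff.mpr hc)) (not_le.mpr h)

theorem toSyn_leadExp_le {f : MvPolynomial σ K} {b : m.syn}
    (h : ∀ d ∈ f.support, m.toSyn d ≤ b) : m.toSyn (leadExp m f) ≤ b := by
  rw [toSyn_leadExp]; exact Finset.sup_le h

theorem leadExp_zero : leadExp m (0 : MvPolynomial σ K) = 0 := by
  simp [leadExp]

theorem leadExp_neg (f : MvPolynomial σ K) : leadExp m (-f) = leadExp m f := by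
  simp [leadExp, MvPolynomial.support_neg]

theorem coeff_add_leadExp [DecidableEq σ] (f g : MvPolynomial σ K) :
    (f * g).coeff (leadExp m f + leadExp m g) = leadCoeff m f * leadCoeff m g := by
  rw [MvPolynomial.coeff_mul]
  rw [Finset.sum_eq_single (leadExp m f, leadExp m g)]
  · rfl
  · rintro ⟨u, v⟩ huv hne
    by_contra hc
    have hu : f.coeff u ≠ 0 := left_ne_zero_of_mul hc
    have hv : g.coeff v ≠ 0 := right_ne_zero_of_mul hc
    have h1 := le_toSyn_leadExp m (mem_support_iff.mpr hu)
    have h2 := le_toSyn_leadExp m (mem_support_iff.mpr hv)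
    have hsum : u + v = leadExp m f + leadExp m g := Finset.HasAntidiagonal.mem_antidiagonal.mp huv
    have hsum' : m.toSyn u + m.toSyn v
        = m.toSyn (leadExp m f) + m.toSyn (leadExp m g) := by
      rw [← map_add, ← map_add, hsum]
    have hvB : m.toSyn v = m.toSyn (leadExp m g) := by
      have h3 : m.toSyn (leadExp m f) + m.toSyn (leadExp m g)
          ≤ m.toSyn (leadExp m f) + m.toSyn v := by
        rw [← hsum']
        exact add_le_add_left h1 _
      exact le_antisymm h2 (le_of_add_le_add_left h3)
    have huA : m.toSyn u = m.toSyn (leadExp m f) := by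
      rw [hvB] at hsum'
      exact add_right_cancel hsum'
    exact hne (Prod.ext (m.toSyn.injective huA) (m.toSyn.injective hvB))
  · intro h
    exfalso
    apply h
    rw [Finset.HasAntidiagonal.mem_antidiagonal]

theorem leadExp_mul [DecidableEq σ] {f g : MvPolynomial σ K} (hf : f ≠ 0) (hg : g ≠ 0) :
    leadExp m (f * g) = leadExp m f + leadExp m g := by
  have hc : (f * g).coeff (leadExp m f + leadExp m g) ≠ 0 := by
    rw [coeff_add_leadExp]
    exact mul_ne_zero (leadCoeff_ne_zero m hf) (leadCoeff_ne_zero m hg)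
  apply m.toSyn.injective
  apply le_antisymm
  · apply toSyn_leadExp_le
    intro d hd
    have hd' := MvPolynomial.support_mul f g hd
    rw [Finset.mem_add] at hd'
    obtain ⟨u, hu, v, hv, rfl⟩ := hd'
    rw [map_add, map_add]
    exact add_le_add (le_toSyn_leadExp m hu) (le_toSyn_leadExp m hv)
  · exact le_toSyn_leadExp m (mem_support_iff.mpr hc)

theorem leadExp_C_mul [DecidableEq σ] {c : K} (hc : c ≠ 0) {p : MvPolynomial σ K} (hp : p ≠ 0) :
    leadExp m (C c * p) = leadExp m p := by
  have hC : (C c : MvPolynomial σ K) ≠ 0 := by simpa using hc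
  have hCl : leadExp m (C c : MvPolynomial σ K) = 0 := by
    classical
    have hs : (C c : MvPolynomial σ K).support = {0} := by
      rw [MvPolynomial.C_apply, MvPolynomial.support_monomial, if_neg hc]
    rw [leadExp, hs]
    simp
  rw [leadExp_mul m hC hp, hCl, zero_add]

theorem toSyn_lt_of_mem_sub {f : MvPolynomial σ K} {d : σ →₀ ℕ}
    (hd : d ∈ (f - monomial (leadExp m f) (leadCoeff m f)).support) :
    m.toSyn d < m.toSyn (leadExp m f) := by
  classical
  rw [mem_support_iff, MvPolynomial.coeff_sub, MvPolynomial.coeff_monomial] at hd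
  rcases eq_or_ne d (leadExp m f) with h | h
  · subst h
    simp [leadCoeff] at hd
  · rw [if_neg fun he => h he.symm, sub_zero] at hd
    exact lt_of_le_of_ne (le_toSyn_leadExp m (mem_support_iff.mpr hd))
      fun he => h (m.toSyn.injective he)

theorem leadExp_sub_of_lt {p q : MvPolynomial σ K}
    (h : m.toSyn (leadExp m q) < m.toSyn (leadExp m p)) :
    p - q ≠ 0 ∧ leadExp m (p - q) = leadExp m p := by
  have hp : p ≠ 0 := by
    rintro rfl
    rw [leadExp_zero, map_zero] at h
    exact h.not_ge (by rw [← m.bot_eq_zero]; exact bot_le)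
  have hcq : q.coeff (leadExp m p) = 0 := coeff_eq_zero_of_lt m h
  have hc : (p - q).coeff (leadExp m p) ≠ 0 := by
    rw [MvPolynomial.coeff_sub, hcq, sub_zero]
    exact leadCoeff_ne_zero m hp
  have hne : p - q ≠ 0 := fun h0 => hc (by rw [h0]; simp)
  refine ⟨hne, m.toSyn.injective (le_antisymm ?_
    (le_toSyn_leadExp m (mem_support_iff.mpr hc)))⟩
  apply toSyn_leadExp_le
  intro d hd
  rw [mem_support_iff, MvPolynomial.coeff_sub] at hd
  rcases ne_or_eq (p.coeff d) 0 with h1 | h1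
  · exact le_toSyn_leadExp m (mem_support_iff.mpr h1)
  · have h2 : q.coeff d ≠ 0 := by intro h2; rw [h1, h2] at hd; simp at hd
    exact (le_toSyn_leadExp m (mem_support_iff.mpr h2)).trans h.le

theorem sub_lead_lemma {p q : MvPolynomial σ K}
    (hne : m.toSyn (leadExp m p) ≠ m.toSyn (leadExp m q)) :
    p - q ≠ 0 ∧ m.toSyn (leadExp m p) ≤ m.toSyn (leadExp m (p - q)) ∧
      m.toSyn (leadExp m q) ≤ m.toSyn (leadExp m (p - q)) := by
  rcases hne.lt_or_gt with h | h
  · obtain ⟨h0, heq⟩ := leadExp_sub_of_lt m h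
    have hpq : p - q = -(q - p) := by ring
    have hl : leadExp m (p - q) = leadExp m q := by rw [hpq, leadExp_neg, heq]
    refine ⟨by rw [hpq]; exact neg_ne_zero.mpr h0, ?_, le_of_eq (by rw [hl])⟩
    rw [hl]; exact h.le
  · obtain ⟨h0, heq⟩ := leadExp_sub_of_lt m h
    exact ⟨h0, le_of_eq (by rw [heq]), by rw [heq]; exact h.le⟩

theorem sup_eq_add_of_inf_eq_zero {a b : σ →₀ ℕ} (h : a ⊓ b = 0) : a ⊔ b = a + b := by
  ext i
  have hi : min (a i) (b i) = 0 := by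
    have := DFunLike.congr_fun h i
    simpa [Finsupp.inf_apply] using this
  rw [Finsupp.sup_apply, Finsupp.add_apply]
  rcases Nat.min_eq_zero_iff.mp hi with h0 | h0 <;> simp [h0]

theorem coprime_no_cancel {a b df' dg' : σ →₀ ℕ} (hcop : a ⊓ b = 0)
    (hlt : m.toSyn df' < m.toSyn a) (heq : df' + b = dg' + a) : False := by
  have hab : a ≤ df' := by
    rw [Finsupp.le_def]
    intro i
    have hinf : min (a i) (b i) = 0 := by
      simpa [Finsupp.inf_apply] using DFunLike.congr_fun hcop i
    have hadd : df' i + b i = dg' i + a i := by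
      simpa [Finsupp.add_apply] using DFunLike.congr_fun heq i
    omega
  exact absurd (m.toSyn_monotone hab) hlt.not_ge

end SPolyAux

/-- If the leading monomials of nonzero `f` and `g` are coprime, then `S(f,g)`
reduces to zero via `f, g`: it has a standard representation `S(f,g) = q₁·f + q₂·g`
with the leading monomial of each `qᵢ·(f or g)` at most that of `S(f,g)`. -/
theorem sPoly_reduces_to_zero_of_coprime_leadExp {σ K : Type*} [Field K]
    (m : MonomialOrder σ) (f g : MvPolynomial σ K) (hf : f ≠ 0) (hg : g ≠ 0)
    (hcop : leadExp m f ⊓ leadExp m g = 0) :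
    ∃ q₁ q₂ : MvPolynomial σ K,
      sPoly m f g = q₁ * f + q₂ * g ∧
      (leadExp m (q₁ * f) ≼[m] leadExp m (sPoly m f g)) ∧
      (leadExp m (q₂ * g) ≼[m] leadExp m (sPoly m f g)) := by
  classical
  set a := leadExp m f with ha
  set b := leadExp m g with hb
  set cf := leadCoeff m f with hcf
  set cg := leadCoeff m g with hcg
  have hcf0 : cf ≠ 0 := SPolyAux.leadCoeff_ne_zero m hf
  have hcg0 : cg ≠ 0 := SPolyAux.leadCoeff_ne_zero m hg
  set e : K := cf⁻¹ * cg⁻¹ with he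
  have he0 : e ≠ 0 := mul_ne_zero (inv_ne_zero hcf0) (inv_ne_zero hcg0)
  set f' : MvPolynomial σ K := f - monomial a cf with hf'
  set g' : MvPolynomial σ K := g - monomial b cg with hg'
  have hsup : a ⊔ b = a + b := SPolyAux.sup_eq_add_of_inf_eq_zero hcop
  have hS : sPoly m f g = monomial b cf⁻¹ * f - monomial a cg⁻¹ * g := by
    rw [sPoly, ← ha, ← hb, ← hcf, ← hcg, hsup, add_tsub_cancel_left, add_tsub_cancel_right]
  have hmf : (monomial a cf : MvPolynomial σ K) = f - f' := by rw [hf']; ring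
  have hmg : (monomial b cg : MvPolynomial σ K) = g - g' := by rw [hg']; ring
  have h1 : (monomial b cf⁻¹ : MvPolynomial σ K) = C e * monomial b cg := by
    rw [C_mul_monomial, he, mul_assoc, inv_mul_cancel₀ hcg0, mul_one]
  have h2 : (monomial a cg⁻¹ : MvPolynomial σ K) = C e * monomial a cf := by
    rw [C_mul_monomial, he, mul_comm cf⁻¹ cg⁻¹, mul_assoc, inv_mul_cancel₀ hcf0, mul_one]
  have key : sPoly m f g = C e * (f' * g - g' * f) := by
    rw [hS, h1, h2, hmg, hmf]; ring
  -- strict bound on leading exponents of the truncations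
  have hf'lt : ∀ hf'0 : f' ≠ 0, m.toSyn (leadExp m f') < m.toSyn a :=
    fun hf'0 => SPolyAux.toSyn_lt_of_mem_sub m (SPolyAux.leadExp_mem m hf'0)
  have hg'lt : ∀ hg'0 : g' ≠ 0, m.toSyn (leadExp m g') < m.toSyn b :=
    fun hg'0 => SPolyAux.toSyn_lt_of_mem_sub m (SPolyAux.leadExp_mem m hg'0)
  -- the two products cannot have equal leading exponents
  have hnocancel : ∀ (_ : f' ≠ 0) (_ : g' ≠ 0),
      m.toSyn (leadExp m (f' * g)) ≠ m.toSyn (leadExp m (g' * f)) := by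
    intro hf'0 hg'0 heq
    rw [SPolyAux.leadExp_mul m hf'0 hg, SPolyAux.leadExp_mul m hg'0 hf] at heq
    exact SPolyAux.coprime_no_cancel m hcop (hf'lt hf'0)
      (m.toSyn.injective heq)
  refine ⟨C e * (-g'), C e * f', by rw [key]; ring, ?_, ?_⟩
  · rcases eq_or_ne g' 0 with hg'0 | hg'0
    · rw [hg'0]
      simp only [neg_zero, mul_zero, zero_mul]
      rw [SPolyAux.leadExp_zero, map_zero, ← m.bot_eq_zero]
      exact bot_le
    · have hQ : g' * f ≠ 0 := mul_ne_zero hg'0 hf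
      have hq1 : C e * -g' * f = C e * -(g' * f) := by ring
      rw [hq1, SPolyAux.leadExp_C_mul m he0 (by simpa using hQ), SPolyAux.leadExp_neg]
      rcases eq_or_ne f' 0 with hf'0 | hf'0
      · have : f' * g - g' * f = -(g' * f) := by rw [hf'0]; ring
        rw [key, this, SPolyAux.leadExp_C_mul m he0 (by simpa using hQ),
          SPolyAux.leadExp_neg]
      · obtain ⟨hne0, _, h2'⟩ := SPolyAux.sub_lead_lemma m (hnocancel hf'0 hg'0)
        rw [key, SPolyAux.leadExp_C_mul m he0 hne0]
        exact h2'
  · rcases eq_or_ne f' 0 with hf'0 | hf'0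
    · rw [hf'0]
      simp only [mul_zero, zero_mul]
      rw [SPolyAux.leadExp_zero, map_zero, ← m.bot_eq_zero]
      exact bot_le
    · have hP : f' * g ≠ 0 := mul_ne_zero hf'0 hg
      rw [mul_assoc, SPolyAux.leadExp_C_mul m he0 hP]
      rcases eq_or_ne g' 0 with hg'0 | hg'0
      · have : f' * g - g' * f = f' * g := by rw [hg'0]; ring
        rw [key, this, SPolyAux.leadExp_C_mul m he0 hP]
      · obtain ⟨hne0, h1', _⟩ := SPolyAux.sub_lead_lemma m (hnocancel hf'0 hg'0)
        rw [key, SPolyAux.leadExp_C_mul m he0 hne0]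
        exact h1'
end

section
/- Let f, g be nonzero polynomials in k[x₀,…,x_n] with a fixed monomial order, and let a, b be monomials such that gcd(a,b) = gcd(a, LM(g)) = gcd(b, LM(f)) = 1. Then S(a·f, b·g) = a·b·S(f, g). -/
open MvPolynomial
open scoped MonomialOrder

lemma sup'_const_add {M α : Type*} [AddCommMonoid M] [LinearOrder M] [IsOrderedCancelAddMonoid M] {s : Finset α}
    (hs : s.Nonempty) (c : M) (h : α → M) :
    s.sup' hs (fun x => c + h x) = c + s.sup' hs h := by
  apply le_antisymm
  · exact Finset.sup'_le _ _ fun x hx => add_le_add_right (Finset.le_sup' h hx) c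
  · obtain ⟨x, hx, hmax⟩ := Finset.exists_mem_eq_sup' hs h
    rw [hmax]
    exact Finset.le_sup' (fun x => c + h x) hx

lemma support_monomial_one_mul {σ K : Type*} [Field K] (a : σ →₀ ℕ) (f : MvPolynomial σ K) :
    (monomial a 1 * f).support = f.support.map (addLeftEmbedding a) :=
  AddMonoidAlgebra.support_coeff_single_mul f (1 : K) (by simp) a

lemma leadExp_monomial_one_mul {σ K : Type*} [Field K] (m : MonomialOrder σ)
    (a : σ →₀ ℕ) (f : MvPolynomial σ K) (hf : f ≠ 0) :
    leadExp m (monomial a 1 * f) = a + leadExp m f := by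
  have hne : f.support.Nonempty := MvPolynomial.support_nonempty.mpr hf
  apply m.toSyn.injective
  rw [leadExp, leadExp, AddEquiv.apply_symm_apply, map_add, AddEquiv.apply_symm_apply,
    support_monomial_one_mul, Finset.sup_map,
    ← Finset.sup'_eq_sup hne ((fun d => m.toSyn d) ∘ (addLeftEmbedding a)),
    ← Finset.sup'_eq_sup hne (fun d => m.toSyn d)]
  rw [show ((fun d => m.toSyn d) ∘ (addLeftEmbedding a)) = fun d => m.toSyn a + m.toSyn d by
    ext d; simp [addLeftEmbedding, map_add]]
  exact sup'_const_add hne _ _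

lemma leadCoeff_monomial_one_mul {σ K : Type*} [Field K] (m : MonomialOrder σ)
    (a : σ →₀ ℕ) (f : MvPolynomial σ K) (hf : f ≠ 0) :
    leadCoeff m (monomial a 1 * f) = leadCoeff m f := by
  rw [leadCoeff, leadCoeff, leadExp_monomial_one_mul m a f hf, coeff_monomial_mul, one_mul]

/-- For nonzero `f, g` and monomials `a, b` with
`gcd(a,b) = gcd(a, LM g) = gcd(b, LM f) = 1`, one has `S(a·f, b·g) = a·b·S(f, g)`. -/
theorem sPoly_smul_monomial_coprime {σ K : Type*} [Field K] (m : MonomialOrder σ)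
    (f g : MvPolynomial σ K) (hf : f ≠ 0) (hg : g ≠ 0) (a b : σ →₀ ℕ)
    (hab : a ⊓ b = 0) (hag : a ⊓ leadExp m g = 0) (hbf : b ⊓ leadExp m f = 0) :
    sPoly m (monomial a 1 * f) (monomial b 1 * g) = monomial (a + b) 1 * sPoly m f g := by
  have hu := leadExp_monomial_one_mul m a f hf
  have hv := leadExp_monomial_one_mul m b g hg
  have hcf := leadCoeff_monomial_one_mul m a f hf
  have hcg := leadCoeff_monomial_one_mul m b g hg
  set u := leadExp m f with hudef
  set v := leadExp m g with hvdef
  have key : ∀ x, a x ⊓ b x = 0 ∧ a x ⊓ v x = 0 ∧ b x ⊓ u x = 0 := by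
    intro x
    refine ⟨?_, ?_, ?_⟩
    · rw [← Finsupp.inf_apply, hab]; rfl
    · rw [← Finsupp.inf_apply, hag]; rfl
    · rw [← Finsupp.inf_apply, hbf]; rfl
  have h1 : (a + u) ⊔ (b + v) - (a + u) = b + (u ⊔ v - u) := by
    ext x
    obtain ⟨k1, k2, k3⟩ := key x
    simp only [Finsupp.tsub_apply, Finsupp.add_apply, Finsupp.sup_apply] at *
    omega
  have h2 : (a + u) ⊔ (b + v) - (b + v) = a + (u ⊔ v - v) := by
    ext x
    obtain ⟨k1, k2, k3⟩ := key x
    simp only [Finsupp.tsub_apply, Finsupp.add_apply, Finsupp.sup_apply] at *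
    omega
  rw [sPoly, sPoly, hu, hv, hcf, hcg, h1, h2, mul_sub,
    ← mul_assoc, ← mul_assoc, ← mul_assoc, ← mul_assoc,
    monomial_mul, monomial_mul, monomial_mul, monomial_mul, mul_one, mul_one, one_mul, one_mul,
    add_right_comm b (u ⊔ v - u) a, add_right_comm a (u ⊔ v - v) b, add_comm b a]
end

section
/- Let p, q, r, s be monomials in k[x₀,…,x_n] with a fixed monomial order. Whichever of p·s − r·q or r·q − p·s has its leading term written first (i.e., is correctly ordered) reduces to zero upon division by the correctly ordered versions of the binomials p − q and r − s. In particular, p·s − r·q lies in the ideal generated by p − q and r − s. -/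
open MvPolynomial
open scoped MonomialOrder

lemma toSyn_leadExp {σ K : Type*} [Field K] (m : MonomialOrder σ) (f : MvPolynomial σ K) :
    m.toSyn (leadExp m f) = f.support.sup fun d => m.toSyn d := by
  simp [leadExp]

lemma binom_lead_le {σ K : Type*} [Field K] (m : MonomialOrder σ) {u v w z : σ →₀ ℕ}
    (hwz : w ≠ z)
    (hu : m.toSyn u ≤ m.toSyn w ∨ m.toSyn u ≤ m.toSyn z)
    (hv : m.toSyn v ≤ m.toSyn w ∨ m.toSyn v ≤ m.toSyn z) :
    leadExp m (monomial u (1 : K) - monomial v 1) ≼[m]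
      leadExp m (monomial w (1 : K) - monomial z 1) := by
  classical
  have hw : w ∈ (monomial w (1 : K) - monomial z 1).support := by
    simp [mem_support_iff, coeff_monomial, Ne.symm hwz]
  have hz : z ∈ (monomial w (1 : K) - monomial z 1).support := by
    simp [mem_support_iff, coeff_monomial, hwz]
  rw [toSyn_leadExp, toSyn_leadExp]
  apply Finset.sup_le
  intro e he
  have hsub : e ∈ ({u} : Finset (σ →₀ ℕ)) ∪ {v} := by
    have := MvPolynomial.support_sub σ (monomial u (1 : K)) (monomial v 1) he
    refine Finset.mem_of_subset ?_ this
    exact Finset.union_subset_union support_monomial_subset support_monomial_subset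
  simp only [Finset.mem_union, Finset.mem_singleton] at hsub
  rcases hsub with rfl | rfl
  · rcases hu with h | h
    · exact le_trans h (Finset.le_sup hw)
    · exact le_trans h (Finset.le_sup hz)
  · rcases hv with h | h
    · exact le_trans h (Finset.le_sup hw)
    · exact le_trans h (Finset.le_sup hz)

/-- For monomials `p, q, r, s`, the (correctly ordered version of) `p·s − r·q` reduces
to zero via the (correctly ordered versions of the) binomials `p − q` and `r − s`:
there is a standard representation `p·s − r·q = q₁·(p − q) + q₂·(r − s)` in which the
leading monomial of each summand is at most that of `p·s − r·q`.  (Since leading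
exponents are insensitive to sign, this simultaneously captures whichever of
`p·s − r·q` or `r·q − p·s` is correctly ordered.)  In particular, `p·s − r·q` lies in
the ideal generated by `p − q` and `r − s`. -/
theorem monomial_cross_difference_reduces {σ K : Type*} [Field K]
    (m : MonomialOrder σ) (a b c d : σ →₀ ℕ) :
    (∃ q₁ q₂ : MvPolynomial σ K,
      monomial a 1 * monomial d 1 - monomial c 1 * monomial b 1 =
          q₁ * (monomial a 1 - monomial b 1) + q₂ * (monomial c 1 - monomial d 1) ∧
      (leadExp m (q₁ * (monomial a (1 : K) - monomial b 1)) ≼[m]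
        leadExp m (monomial a (1 : K) * monomial d 1 - monomial c 1 * monomial b 1)) ∧
      (leadExp m (q₂ * (monomial c (1 : K) - monomial d 1)) ≼[m]
        leadExp m (monomial a (1 : K) * monomial d 1 - monomial c 1 * monomial b 1))) ∧
    monomial a 1 * monomial d 1 - monomial c 1 * monomial b 1 ∈
      Ideal.span {monomial a (1 : K) - monomial b 1, monomial c 1 - monomial d 1} := by
  have key : ∃ q₁ q₂ : MvPolynomial σ K,
      monomial a 1 * monomial d 1 - monomial c 1 * monomial b 1 =
          q₁ * (monomial a 1 - monomial b 1) + q₂ * (monomial c 1 - monomial d 1) ∧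
      (leadExp m (q₁ * (monomial a (1 : K) - monomial b 1)) ≼[m]
        leadExp m (monomial a (1 : K) * monomial d 1 - monomial c 1 * monomial b 1)) ∧
      (leadExp m (q₂ * (monomial c (1 : K) - monomial d 1)) ≼[m]
        leadExp m (monomial a (1 : K) * monomial d 1 - monomial c 1 * monomial b 1)) := by
    by_cases h0 : a + d = c + b
    · refine ⟨0, 0, ?_, ?_, ?_⟩
      · simp [monomial_mul, h0]
      all_goals
        simp only [zero_mul]
        rw [toSyn_leadExp]
        simp only [MvPolynomial.support_zero, Finset.sup_empty]
        exact bot_le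
    · by_cases h1 : m.toSyn b ≤ m.toSyn a ∨ m.toSyn d ≤ m.toSyn c
      · refine ⟨monomial d 1, -monomial b 1, ?_, ?_, ?_⟩
        · simp only [mul_sub, neg_mul, monomial_mul, one_mul]
          rw [add_comm d a, add_comm d b, add_comm b c, add_comm b d]
          ring
        · rw [show (monomial d (1:K)) * (monomial a 1 - monomial b 1)
              = monomial (d + a) 1 - monomial (d + b) 1 by
                simp [mul_sub, monomial_mul]]
          rw [show monomial a (1:K) * monomial d 1 - monomial c 1 * monomial b 1
              = monomial (a + d) 1 - monomial (c + b) 1 by simp [monomial_mul]]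
          apply binom_lead_le m h0
          · left; rw [add_comm d a]
          · rcases h1 with h | h
            · left
              rw [map_add, map_add, add_comm (m.toSyn d)]
              exact add_le_add h le_rfl
            · right
              rw [map_add, map_add, add_comm (m.toSyn d), add_comm (m.toSyn c)]
              exact add_le_add le_rfl h
        · rw [show (-monomial b (1:K)) * (monomial c 1 - monomial d 1)
              = monomial (b + d) 1 - monomial (b + c) 1 by
                simp [mul_sub, neg_mul, monomial_mul]; ring]
          rw [show monomial a (1:K) * monomial d 1 - monomial c 1 * monomial b 1
              = monomial (a + d) 1 - monomial (c + b) 1 by simp [monomial_mul]]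
          apply binom_lead_le m h0
          · rcases h1 with h | h
            · left
              rw [map_add, map_add]
              exact add_le_add h le_rfl
            · right
              rw [map_add, map_add, add_comm (m.toSyn c)]
              exact add_le_add le_rfl h
          · right; rw [add_comm b c]
      · push_neg at h1
        obtain ⟨hab, hcd⟩ := h1
        replace hab := le_of_lt hab
        replace hcd := le_of_lt hcd
        refine ⟨monomial c 1, -monomial a 1, ?_, ?_, ?_⟩
        · simp only [mul_sub, neg_mul, monomial_mul, one_mul]
          rw [add_comm c a, add_comm a d]
          ring
        · rw [show (monomial c (1:K)) * (monomial a 1 - monomial b 1)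
              = monomial (c + a) 1 - monomial (c + b) 1 by
                simp [mul_sub, monomial_mul]]
          rw [show monomial a (1:K) * monomial d 1 - monomial c 1 * monomial b 1
              = monomial (a + d) 1 - monomial (c + b) 1 by simp [monomial_mul]]
          apply binom_lead_le m h0
          · right
            rw [map_add, map_add]
            exact add_le_add le_rfl hab
          · right; exact le_rfl
        · rw [show (-monomial a (1:K)) * (monomial c 1 - monomial d 1)
              = monomial (a + d) 1 - monomial (a + c) 1 by
                simp [mul_sub, neg_mul, monomial_mul]; ring]
          rw [show monomial a (1:K) * monomial d 1 - monomial c 1 * monomial b 1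
              = monomial (a + d) 1 - monomial (c + b) 1 by simp [monomial_mul]]
          apply binom_lead_le m h0
          · left; exact le_rfl
          · left
            rw [map_add, map_add]
            exact add_le_add le_rfl hcd
  refine ⟨key, ?_⟩
  obtain ⟨q₁, q₂, heq, -, -⟩ := key
  rw [heq]
  exact Ideal.add_mem _
    (Ideal.mul_mem_left _ _ (Ideal.subset_span (by simp)))
    (Ideal.mul_mem_left _ _ (Ideal.subset_span (by simp)))
end

section
/- Let f ∈ k[x₀,…,x_n] be a nonzero polynomial, z a variable, and ν an additional variable, with a monomial order on k[x₀,…,x_n, ν] in which ν exceeds every other variable. If gcd(LM(f), z) = 1, then S(ν·z − z, ν·f) reduces, via division by ν·z − z, to −(z·f)/LC(f), where LC(f) is the leading coefficient of f. -/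
open MvPolynomial
open scoped MonomialOrder

section Aux

variable {σ K : Type*} [Field K] (m : MonomialOrder σ)

lemma le_leadExp {f : MvPolynomial σ K} {d : σ →₀ ℕ} (hd : d ∈ f.support) :
    d ≼[m] leadExp m f := by
  unfold leadExp
  rw [AddEquiv.apply_symm_apply]
  exact Finset.le_sup (f := fun d => m.toSyn d) hd

lemma leadExp_mem {f : MvPolynomial σ K} (hf : f ≠ 0) : leadExp m f ∈ f.support := by
  obtain ⟨d, hd, h⟩ := Finset.exists_mem_eq_sup f.support
    (by simpa [MvPolynomial.support_nonempty] using hf) (fun d => m.toSyn d)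
  unfold leadExp
  rw [h, AddEquiv.symm_apply_apply]
  exact hd

lemma leadCoeff_ne_zero {f : MvPolynomial σ K} (hf : f ≠ 0) : leadCoeff m f ≠ 0 :=
  MvPolynomial.mem_support_iff.mp (leadExp_mem m hf)

lemma leadExp_eq {f : MvPolynomial σ K} {e : σ →₀ ℕ} (he : f.coeff e ≠ 0)
    (h : ∀ d ∈ f.support, d ≼[m] e) : leadExp m f = e := by
  apply m.toSyn.injective
  unfold leadExp
  rw [AddEquiv.apply_symm_apply]
  exact le_antisymm (Finset.sup_le h) (Finset.le_sup (f := fun d => m.toSyn d)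
    (MvPolynomial.mem_support_iff.mpr he))

lemma leadExp_monomial {a : σ →₀ ℕ} {c : K} (hc : c ≠ 0) :
    leadExp m (monomial a c) = a := by
  classical
  apply leadExp_eq
  · rw [coeff_monomial, if_pos rfl]
    exact hc
  · intro d hd
    rw [support_monomial, if_neg hc, Finset.mem_singleton] at hd
    exact le_of_eq (congrArg _ hd)

lemma leadCoeff_monomial {a : σ →₀ ℕ} {c : K} (hc : c ≠ 0) :
    leadCoeff m (monomial a c) = c := by
  classical
  rw [leadCoeff, leadExp_monomial m hc, coeff_monomial, if_pos rfl]

lemma coeff_mul_lead (p q : MvPolynomial σ K) :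
    (p * q).coeff (leadExp m p + leadExp m q) = leadCoeff m p * leadCoeff m q := by
  classical
  rw [MvPolynomial.coeff_mul]
  rw [Finset.sum_eq_single_of_mem (leadExp m p, leadExp m q)
    (Finset.HasAntidiagonal.mem_antidiagonal.mpr rfl)]
  · rfl
  rintro ⟨a, b⟩ hab hne
  rw [Finset.HasAntidiagonal.mem_antidiagonal] at hab
  by_contra hmul
  have ha := le_leadExp m (f := p) (MvPolynomial.mem_support_iff.mpr
    (left_ne_zero_of_mul hmul))
  have hb := le_leadExp m (f := q) (MvPolynomial.mem_support_iff.mpr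
    (right_ne_zero_of_mul hmul))
  have hsum : m.toSyn a + m.toSyn b = m.toSyn (leadExp m p) + m.toSyn (leadExp m q) := by
    rw [← map_add, ← map_add]
    exact congrArg m.toSyn hab
  have haeq : a = leadExp m p := by
    apply m.toSyn.injective
    have h3 : m.toSyn (leadExp m p) + m.toSyn b ≤ m.toSyn a + m.toSyn b := by
      rw [hsum]
      exact add_le_add_right hb _
    exact le_antisymm ha (le_of_add_le_add_right h3)
  have hbeq : b = leadExp m q := by
    apply add_left_cancel (a := a)
    rw [haeq] at hab ⊢
    exact hab
  exact hne (by rw [haeq, hbeq])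

lemma leadExp_mul {p q : MvPolynomial σ K} (hp : p ≠ 0) (hq : q ≠ 0) :
    leadExp m (p * q) = leadExp m p + leadExp m q := by
  classical
  apply leadExp_eq
  · rw [coeff_mul_lead]
    exact mul_ne_zero (leadCoeff_ne_zero m hp) (leadCoeff_ne_zero m hq)
  · intro d hd
    have := MvPolynomial.support_mul p q hd
    rw [Finset.mem_add] at this
    obtain ⟨a, ha, b, hb, rfl⟩ := this
    rw [map_add, map_add]
    exact add_le_add (le_leadExp m ha) (le_leadExp m hb)

lemma leadCoeff_mul {p q : MvPolynomial σ K} (hp : p ≠ 0) (hq : q ≠ 0) :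
    leadCoeff m (p * q) = leadCoeff m p * leadCoeff m q := by
  rw [leadCoeff, leadExp_mul m hp hq, coeff_mul_lead]

end Aux

/-- Let `ν` be a variable exceeding all others in the monomial order, `z` another
variable, and `f` a nonzero polynomial not involving `ν` whose leading monomial is
coprime to `z`.  Then `S(ν·z − z, ν·f)` reduces, via division by `ν·z − z`, to
`−(z·f)/LC(f)`: there is `q` with
`S(ν·z − z, ν·f) = q·(ν·z − z) − (LC f)⁻¹·(z·f)` and with the leading monomial of
`q·(ν·z − z)` at most that of the S-polynomial. -/
theorem sPoly_nu_top_coprime {σ K : Type*} [Field K] (m : MonomialOrder σ)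
    (ν z : σ) (hzν : z ≠ ν)
    (helim : ∀ d e : σ →₀ ℕ, d ν < e ν → d ≺[m] e)
    (f : MvPolynomial σ K) (hf : f ≠ 0)
    (hνf : ∀ d ∈ f.support, d ν = 0)
    (hz : leadExp m f z = 0) :
    ∃ q : MvPolynomial σ K,
      sPoly m (X ν * X z - X z) (X ν * f) =
          q * (X ν * X z - X z) - C (leadCoeff m f)⁻¹ * (X z * f) ∧
      (leadExp m (q * (X ν * X z - X z)) ≼[m]
        leadExp m (sPoly m (X ν * X z - X z) (X ν * f))) := by
  classical
  set E := leadExp m f with hE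
  set c := leadCoeff m f with hc
  set eν : σ →₀ ℕ := Finsupp.single ν 1 with heν
  set ez : σ →₀ ℕ := Finsupp.single z 1 with hez
  have hcne : c ≠ 0 := leadCoeff_ne_zero m hf
  have hEν : E ν = 0 := hνf E (leadExp_mem m hf)
  have hXν : (X ν : MvPolynomial σ K) = monomial eν 1 := rfl
  have hXz : (X z : MvPolynomial σ K) = monomial ez 1 := rfl
  have hgmon : (X ν * X z - X z : MvPolynomial σ K)
      = monomial (eν + ez) 1 - monomial ez 1 := by
    rw [hXν, hXz, monomial_mul, one_mul]
  have hezν : ez ν = 0 := by simp [hez, Finsupp.single_apply, hzν]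
  have hne : eν + ez ≠ ez := by
    intro h
    have h2 := DFunLike.congr_fun h ν
    rw [Finsupp.add_apply, hezν] at h2
    simp [heν] at h2
  -- leading data of g
  have hgE : leadExp m (X ν * X z - X z : MvPolynomial σ K) = eν + ez := by
    rw [hgmon]
    apply leadExp_eq
    · simp [MvPolynomial.coeff_sub, coeff_monomial, hne, heν, Finsupp.single_eq_zero]
    · intro d hd
      have := MvPolynomial.support_sub σ _ _ hd
      rw [Finset.mem_union] at this
      rcases this with h | h
      · rw [support_monomial, if_neg one_ne_zero, Finset.mem_singleton] at h
        exact le_of_eq (congrArg _ h)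
      · rw [support_monomial, if_neg one_ne_zero, Finset.mem_singleton] at h
        subst h
        refine le_of_lt (helim _ _ ?_)
        simp [heν, hezν]
  have hgC : leadCoeff m (X ν * X z - X z : MvPolynomial σ K) = 1 := by
    rw [leadCoeff, hgE, hgmon]
    simp [MvPolynomial.coeff_sub, coeff_monomial, hne, heν, Finsupp.single_eq_zero]
  have hXνne : (X ν : MvPolynomial σ K) ≠ 0 := X_ne_zero ν
  -- leading data of h
  have hhE : leadExp m (X ν * f) = eν + E := by
    rw [leadExp_mul m hXνne hf, hXν, leadExp_monomial m one_ne_zero, hE]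
  have hhC : leadCoeff m (X ν * f) = c := by
    rw [leadCoeff_mul m hXνne hf, hXν, leadCoeff_monomial m one_ne_zero, one_mul, hc]
  -- the sup
  have hsup : (eν + ez) ⊔ (eν + E) = eν + ez + E := by
    ext a
    rw [Finsupp.sup_apply]
    simp only [Finsupp.add_apply]
    rcases eq_or_ne a z with rfl | haz
    · simp [hz, ← hE]
    · have : ez a = 0 := by simp [hez, Finsupp.single_apply, Ne.symm haz]
      simp [this]
  have hsub1 : eν + ez + E - (eν + ez) = E := add_tsub_cancel_left _ _
  have hsub2 : eν + ez + E - (eν + E) = ez := by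
    have : eν + ez + E = eν + E + ez := by abel
    rw [this, add_tsub_cancel_left]
  -- rewrite sPoly
  have hS : sPoly m (X ν * X z - X z) (X ν * f)
      = monomial E 1 * (X ν * X z - X z) - monomial ez c⁻¹ * (X ν * f) := by
    rw [sPoly, hgE, hhE, hgC, hhC, hsup, hsub1, hsub2, inv_one]
  set q : MvPolynomial σ K := monomial E 1 - C c⁻¹ * f with hq
  have hmonez : (monomial ez c⁻¹ : MvPolynomial σ K) = C c⁻¹ * X z := by
    rw [hXz, C_mul_monomial, mul_one]
  have heq : sPoly m (X ν * X z - X z) (X ν * f)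
      = q * (X ν * X z - X z) - C c⁻¹ * (X z * f) := by
    rw [hS, hmonez, hq]
    ring
  refine ⟨q, heq, ?_⟩
  rcases eq_or_ne q 0 with hq0 | hq0
  · rw [hq0, zero_mul]
    have : leadExp m (0 : MvPolynomial σ K) = 0 := by
      simp [leadExp]
    rw [this, map_zero]
    exact bot_le
  · have hgne : (X ν * X z - X z : MvPolynomial σ K) ≠ 0 := by
      intro h0
      rw [h0] at hgC
      have hz0 : leadCoeff m (0 : MvPolynomial σ K) = 0 := by
        simp [leadCoeff, leadExp]
      rw [hz0] at hgC
      exact zero_ne_one hgC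
    have hDq : leadExp m (q * (X ν * X z - X z)) = leadExp m q + (eν + ez) := by
      rw [leadExp_mul m hq0 hgne, hgE]
    -- leadExp q is ν-free
    have hqν : (leadExp m q) ν = 0 := by
      have hmem := leadExp_mem m hq0
      rw [hq] at hmem
      have := MvPolynomial.support_sub σ _ _ hmem
      rw [Finset.mem_union] at this
      rcases this with h | h
      · rw [support_monomial, if_neg one_ne_zero, Finset.mem_singleton] at h
        rw [h]; exact hEν
      · have : leadExp m q ∈ f.support := by
          rw [MvPolynomial.mem_support_iff] at h ⊢
          intro h0
          exact h (by rw [coeff_C_mul, h0, mul_zero])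
        exact hνf _ this
    set D := leadExp m q + (eν + ez) with hD
    have hDν : D ν = 1 := by
      simp [hD, Finsupp.add_apply, hqν, heν, hezν]
    -- coeff of S at D is nonzero
    have hzf : (X z * f).coeff D = 0 := by
      by_contra h
      have hmem : D ∈ (X z * f).support := MvPolynomial.mem_support_iff.mpr h
      have := MvPolynomial.support_mul _ _ hmem
      rw [Finset.mem_add] at this
      obtain ⟨a, ha, b, hb, hab⟩ := this
      have haz : a = ez := by
        rw [hXz, support_monomial, if_neg one_ne_zero, Finset.mem_singleton] at ha
        exact ha
      have : D ν = 0 := by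
        rw [← hab, Finsupp.add_apply, haz, hezν, hνf b hb]
      rw [hDν] at this
      exact one_ne_zero this
    have hcoeff : (sPoly m (X ν * X z - X z) (X ν * f)).coeff D ≠ 0 := by
      rw [heq, MvPolynomial.coeff_sub, coeff_C_mul, hzf, mul_zero, sub_zero]
      have hco : (q * (X ν * X z - X z)).coeff D = leadCoeff m q * leadCoeff m (X ν * X z - X z) := by
        rw [hD, ← hgE]
        exact coeff_mul_lead m _ _
      rw [hco, hgC, mul_one]
      exact leadCoeff_ne_zero m hq0
    rw [hDq]
    exact le_leadExp m (MvPolynomial.mem_support_iff.mpr hcoeff)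
end
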